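/- arXiv:1805.02630 — 8 statements merged into one kernel-verified Lean document; each statement's English description precedes it below -/
import Mathlib

section
/- Let (V,q) be a quadratic space over a commutative ring R embedded in an associative R-algebra A, i.e. V ⊆ A and q(v) = v·α(v) = α(v)·v for an isometry α of (V,q). Then for all v, w ∈ V, the element v·w·v lies in V. -/
/-- If (V,q) is a (non-degenerate) quadratic space embedded in an
associative algebra A via an isometry α with v·α(v) = α(v)·v = q(v)·1, then
for all v, w ∈ V the element v·w·v lies in V. -/
theorem embedding_vwv_mem {R A : Type*} [CommRing R] [Ring A] [Algebra R A]
    (V : Submodule R A) (Q : QuadraticForm R V)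
    (hnd : ∀ x : V, (∀ v : V, QuadraticMap.polar Q x v = 0) → x = 0)
    (α : V ≃ₗ[R] V) (hα : ∀ v : V, Q (α v) = Q v)
    (hemb : ∀ v : V, (v : A) * (α v : A) = algebraMap R A (Q v) ∧
      (α v : A) * (v : A) = algebraMap R A (Q v)) :
    ∀ v w : V, (v : A) * (w : A) * (v : A) ∈ V := by
  intro v w
  set u : V := α.symm w with hu
  have hw : α u = w := α.apply_symm_apply w
  have h1 := (hemb (v + u)).1
  have h2 := (hemb v).1
  have h3 := (hemb u).1
  have hmap : α (v + u) = α v + α u := map_add α v u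
  have key : (v : A) * (w : A) + (u : A) * ((α v : V) : A)
      = algebraMap R A (QuadraticMap.polar Q v u) := by
    have hQ : Q (v + u) = Q v + Q u + QuadraticMap.polar Q v u := by
      simp only [QuadraticMap.polar]
      ring
    rw [hmap] at h1
    push_cast at h1
    rw [add_mul, mul_add, mul_add, hQ, map_add, map_add, ← h2, ← h3, hw] at h1
    have := h1
    linear_combination (norm := noncomm_ring) this
  have hαv := (hemb v).2
  have hexp : (v : A) * (w : A) * (v : A)
      = QuadraticMap.polar Q v u • (v : A) - Q v • (u : A) := by
    have : (v : A) * (w : A) = algebraMap R A (QuadraticMap.polar Q v u)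
        - (u : A) * ((α v : V) : A) := by rw [eq_sub_iff_add_eq]; exact key
    rw [this, sub_mul, mul_assoc, hαv, Algebra.smul_def, Algebra.smul_def,
      ← Algebra.commutes (Q v) (u : A)]
  rw [hexp]
  exact Submodule.sub_mem V (Submodule.smul_mem V _ v.2) (Submodule.smul_mem V _ u.2)
end

section
/- Let (V,q) be a quadratic space embedded in an algebra A with isometry α (written v̄ = α(v)) satisfying q(v) = v·v̄ = v̄·v. Then for all v, w ∈ V, the conjugate of vwv satisfies α(vwv) = α(v)·α(w)·α(v). -/
/-- For an embedding (V,q) ⊆ A with isometry α (v̄ = α v) and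
q(v) = v·v̄ = v̄·v, the conjugate of vwv satisfies α(vwv) = α(v)·α(w)·α(v). -/
theorem embedding_conj_vwv {R A : Type*} [CommRing R] [Ring A] [Algebra R A]
    (V : Submodule R A) (Q : QuadraticForm R V)
    (hnd : ∀ x : V, (∀ v : V, QuadraticMap.polar Q x v = 0) → x = 0)
    (α : V ≃ₗ[R] V) (hα : ∀ v : V, Q (α v) = Q v)
    (hemb : ∀ v : V, (v : A) * (α v : A) = algebraMap R A (Q v) ∧
      (α v : A) * (v : A) = algebraMap R A (Q v))
    (hmem : ∀ v w : V, (v : A) * (w : A) * (v : A) ∈ V) :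
    ∀ v w : V,
      ((α ⟨(v : A) * (w : A) * (v : A), hmem v w⟩ : V) : A) =
        (α v : A) * (α w : A) * (α v : A) := by
  have hpolar : ∀ x z : V, QuadraticMap.polar Q (α x) (α z) = QuadraticMap.polar Q x z := by
    intro x z
    simp only [QuadraticMap.polar, ← map_add, hα]
  have hrel : ∀ x z : V, (x : A) * (α z : A) + (z : A) * (α x : A)
      = algebraMap R A (QuadraticMap.polar Q x z) := by
    intro x z
    have h1 := (hemb (x + z)).1
    simp only [map_add, Submodule.coe_add] at h1
    rw [QuadraticMap.polar, map_sub, map_sub, ← h1, ← (hemb x).1, ← (hemb z).1]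
    noncomm_ring
  -- key identity: x y x = B(x, α⁻¹ y) x - Q x • α⁻¹ y
  have key : ∀ x y : V, (x : A) * (y : A) * (x : A)
      = algebraMap R A (QuadraticMap.polar Q x (α.symm y)) * (x : A)
        - algebraMap R A (Q x) * ((α.symm y : V) : A) := by
    intro x y
    have h := hrel x (α.symm y)
    rw [α.apply_symm_apply] at h
    have h2 := (hemb x).2
    calc (x : A) * (y : A) * (x : A)
        = (algebraMap R A (QuadraticMap.polar Q x (α.symm y))
            - ((α.symm y : V) : A) * (α x : A)) * (x : A) := by
          rw [← h]; noncomm_ring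
      _ = algebraMap R A (QuadraticMap.polar Q x (α.symm y)) * (x : A)
            - ((α.symm y : V) : A) * ((α x : A) * (x : A)) := by noncomm_ring
      _ = _ := by rw [h2, ← Algebra.commutes (Q x) ((α.symm y : V) : A)]
  intro v w
  have hv : (⟨(v : A) * (w : A) * (v : A), hmem v w⟩ : V)
      = QuadraticMap.polar Q v (α.symm w) • v - Q v • (α.symm w) := by
    apply Subtype.ext
    simp only [SetLike.mk_smul_mk, Submodule.coe_sub, SetLike.val_smul, Algebra.smul_def]
    exact key v w
  rw [hv, map_sub, map_smul, map_smul, α.apply_symm_apply]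
  have hk := key (α v) (α w)
  rw [α.symm_apply_apply] at hk
  rw [hk]
  have : QuadraticMap.polar Q (α v) w = QuadraticMap.polar Q v (α.symm w) := by
    conv_lhs => rw [← α.apply_symm_apply w]
    exact hpolar v (α.symm w)
  rw [this, hα]
  simp [Algebra.smul_def]
end

section
/- Let (V,q) ⊆ A be an embedding of a quadratic space with isometry α, such that 1_A ∈ V and α(1_A) = 1_A. Then α has order dividing 2, i.e. α(α(v)) = v for all v ∈ V. -/
/-- If 1_A ∈ V and α(1_A) = 1_A, then the isometry α of the
embedding has order dividing 2: α(α(v)) = v for all v ∈ V. -/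
theorem embedding_isometry_involutive {R A : Type*} [CommRing R] [Ring A] [Algebra R A]
    (V : Submodule R A) [Module.Free R V] (Q : QuadraticForm R V)
    (α : V ≃ₗ[R] V) (hα : ∀ v : V, Q (α v) = Q v)
    (hemb : ∀ v : V, (v : A) * (α v : A) = algebraMap R A (Q v) ∧
      (α v : A) * (v : A) = algebraMap R A (Q v))
    (h1 : (1 : A) ∈ V) (hα1 : α ⟨1, h1⟩ = ⟨1, h1⟩) :
    ∀ v : V, α (α v) = v := by
  intro v
  set e : V := ⟨1, h1⟩ with he
  have he1 : ((e : A)) = 1 := rfl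
  have key : ∀ w : V, (w : A) + (α w : A)
      = algebraMap R A (Q (w + e)) - algebraMap R A (Q w) - 1 := by
    intro w
    have h1' := (hemb (w + e)).1
    have h2' := (hemb w).1
    have hαe : α (w + e) = α w + e := by rw [map_add, hα1]
    rw [hαe, Submodule.coe_add, Submodule.coe_add, he1] at h1'
    have expand : ((w : A) + 1) * ((α w : A) + 1)
        = (w : A) * (α w : A) + ((w : A) + (α w : A) + 1) := by noncomm_ring
    rw [expand, h2'] at h1'
    rw [← h1']
    abel
  have hQ1 : Q (α v + e) = Q (v + e) := by
    have h : α v + e = α (v + e) := by rw [map_add, hα1]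
    rw [h, hα]
  have k1 := key v
  have k2 := key (α v)
  rw [hQ1, hα] at k2
  have h := k2.trans k1.symm
  rw [add_comm ((α v : A)) ((α (α v) : A))] at h
  ext
  exact add_right_cancel h
end

section
/- Let (V,q) ⊆ A be an embedding with isometry α (v̄ = α(v)) and suppose 1_A ∈ V with ᾱ(1)=1. Let v ∈ V be such that {v, 1} are R-linearly independent (in the sense that v + r·1 being zero forces r=0 and the coefficient of v zero). If v' ∈ V is such that v + v' ∈ R·1 and v·v' ∈ R·1, then v' = α(v). -/
/-- Lemma 1: Suppose 1_A ∈ V, α(1)=1. Let v ∈ V with {v,1}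
linearly independent (s•v + r·1 = 0 forces s = 0 and r = 0). If v' ∈ V is such
that v + v' and v·v' are scalars, then v' = α(v). -/
theorem embedding_lemma1 {R A : Type*} [CommRing R] [Ring A] [Algebra R A]
    (V : Submodule R A) (Q : QuadraticForm R V)
    (α : V ≃ₗ[R] V) (hα : ∀ v : V, Q (α v) = Q v)
    (hemb : ∀ v : V, (v : A) * (α v : A) = algebraMap R A (Q v) ∧
      (α v : A) * (v : A) = algebraMap R A (Q v))
    (h1 : (1 : A) ∈ V) (hα1 : α ⟨1, h1⟩ = ⟨1, h1⟩)
    (v : V) (hli : ∀ s r : R, s • (v : A) + algebraMap R A r = 0 → s = 0 ∧ r = 0)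
    (v' : V) (hsum : ∃ r : R, (v : A) + (v' : A) = algebraMap R A r)
    (hprod : ∃ r : R, (v : A) * (v' : A) = algebraMap R A r) :
    v' = α v := by
  obtain ⟨r, hr⟩ := hsum
  obtain ⟨t, ht⟩ := hprod
  set s : R := Q (v + ⟨1, h1⟩) - Q v - 1 with hs_def
  -- v + α v = s • 1
  have hv := (hemb v).1
  have key : (v : A) + (α v : A) = algebraMap R A s := by
    have h := (hemb (v + ⟨1, h1⟩)).1
    rw [map_add, hα1] at h
    have hexp : ((v + ⟨1, h1⟩ : V) : A) * ((α v + ⟨1, h1⟩ : V) : A)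
        = algebraMap R A (Q v) + ((v : A) + (α v : A)) + 1 := by
      show ((v : A) + 1) * ((α v : A) + 1) = _
      rw [add_mul, mul_add, mul_add, hv]; simp only [mul_one, one_mul]
      abel
    rw [hexp] at h
    rw [hs_def, map_sub, map_sub, map_one, sub_sub, eq_sub_iff_add_eq, ← h]
    abel
  have hdiff : (v' : A) - (α v : A) = algebraMap R A (r - s) := by
    rw [map_sub, ← hr, ← key]
    abel
  have hmul : (r - s) • (v : A) + algebraMap R A (Q v - t) = 0 := by
    have h2 : (v : A) * ((v' : A) - (α v : A)) = algebraMap R A (t - Q v) := by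
      rw [mul_sub, ht, hv, map_sub]
    rw [hdiff, ← Algebra.commutes, ← Algebra.smul_def] at h2
    rw [h2, ← map_add]
    simp
  obtain ⟨h1', _⟩ := hli _ _ hmul
  have hz : (v' : A) - (α v : A) = 0 := by rw [hdiff, h1', map_zero]
  exact Subtype.ext (sub_eq_zero.mp hz)
end

section
/- Let (V,q) ⊆ A be an embedding with isometry α and 1_A ∈ V, α(1)=1. Let v₁, v₂ ∈ V with q(v₂) = 1 (so v₂·α(v₂) = 1). Then α(v₁) + v₂·v₁·v₂ ∈ v₂·R, i.e. there exists r ∈ R with α(v₁) + v₂v₁v₂ = r·v₂. -/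
/-- Lemma 2: Suppose 1_A ∈ V, α(1)=1. Let v₁, v₂ ∈ V with
q(v₂) = 1. Then α(v₁) + v₂·v₁·v₂ ∈ v₂·R, i.e. there is r ∈ R with
α(v₁) + v₂v₁v₂ = r • v₂. -/
theorem embedding_lemma2 {R A : Type*} [CommRing R] [Ring A] [Algebra R A]
    (V : Submodule R A) (Q : QuadraticForm R V)
    (α : V ≃ₗ[R] V) (hα : ∀ v : V, Q (α v) = Q v)
    (hemb : ∀ v : V, (v : A) * (α v : A) = algebraMap R A (Q v) ∧
      (α v : A) * (v : A) = algebraMap R A (Q v))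
    (h1 : (1 : A) ∈ V) (hα1 : α ⟨1, h1⟩ = ⟨1, h1⟩)
    (v₁ v₂ : V) (hq2 : Q v₂ = 1) :
    ∃ r : R, (α v₁ : A) + (v₂ : A) * (v₁ : A) * (v₂ : A) = r • (v₂ : A) := by
  have hpol : ∀ u w : V, (u : A) * (α w : A) + (w : A) * (α u : A)
      = algebraMap R A (QuadraticMap.polar Q u w) := by
    intro u w
    have h := (hemb (u + w)).1
    have hu := (hemb u).1
    have hw := (hemb w).1
    simp only [map_add, Submodule.coe_add] at h
    rw [QuadraticMap.polar, map_sub, map_sub]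
    rw [add_mul, mul_add, mul_add, hu, hw] at h
    rw [eq_sub_iff_add_eq, eq_sub_iff_add_eq, ← h]
    abel
  set e1 : V := ⟨1, h1⟩ with he1
  have he1A : (e1 : A) = 1 := rfl
  have hrefl : ∀ u : V, (α u : A)
      = algebraMap R A (QuadraticMap.polar Q u e1) - (u : A) := by
    intro u
    have h := hpol u e1
    rw [hα1, he1A, mul_one, one_mul] at h
    rw [eq_sub_iff_add_eq, add_comm]
    exact h
  have ha1 := hrefl v₁
  have ha2 := hrefl v₂
  -- v₂ * v₂ = X₂ * v₂ - 1
  have hB : (v₂ : A) * (v₂ : A)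
      = algebraMap R A (QuadraticMap.polar Q v₂ e1) * (v₂ : A) - 1 := by
    have h := (hemb v₂).1
    rw [hq2, map_one, ha2, mul_sub, ← Algebra.commutes] at h
    rw [eq_sub_iff_add_eq, ← h]
    abel
  -- v₂ * v₁ = v₁*X₂ + X₁*v₂ - P - v₁*v₂
  have hA : (v₂ : A) * (v₁ : A)
      = algebraMap R A (QuadraticMap.polar Q v₂ e1) * (v₁ : A)
        + algebraMap R A (QuadraticMap.polar Q v₁ e1) * (v₂ : A)
        - algebraMap R A (QuadraticMap.polar Q v₁ v₂)
        - (v₁ : A) * (v₂ : A) := by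
    have h := hpol v₁ v₂
    rw [ha1, ha2, mul_sub, mul_sub, ← Algebra.commutes, ← Algebra.commutes] at h
    rw [← h]
    abel
  refine ⟨QuadraticMap.polar Q v₁ e1 * QuadraticMap.polar Q v₂ e1
    - QuadraticMap.polar Q v₁ v₂, ?_⟩
  rw [Algebra.smul_def, map_sub, map_mul, ha1, hA]
  set X₁ : A := algebraMap R A (QuadraticMap.polar Q v₁ e1) with hX₁
  set X₂ : A := algebraMap R A (QuadraticMap.polar Q v₂ e1) with hX₂
  set P : A := algebraMap R A (QuadraticMap.polar Q v₁ v₂) with hP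
  have comm1 : (v₁ : A) * X₂ = X₂ * (v₁ : A) := (Algebra.commutes _ _).symm
  calc X₁ - (v₁:A) + (X₂ * (v₁:A) + X₁ * (v₂:A) - P - (v₁:A) * (v₂:A)) * (v₂:A)
      = X₁ - (v₁:A) + (X₂ * (v₁:A) * (v₂:A) + X₁ * ((v₂:A) * (v₂:A))
        - P * (v₂:A) - (v₁:A) * ((v₂:A) * (v₂:A))) := by noncomm_ring
    _ = X₁ - (v₁:A) + (X₂ * (v₁:A) * (v₂:A) + X₁ * (X₂ * (v₂:A) - 1)
        - P * (v₂:A) - (v₁:A) * (X₂ * (v₂:A) - 1)) := by rw [hB]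
    _ = X₁ * X₂ * (v₂:A) - P * (v₂:A)
        + (X₂ * (v₁:A) * (v₂:A) - (v₁:A) * X₂ * (v₂:A)) := by noncomm_ring
    _ = (X₁ * X₂ - P) * (v₂:A) := by rw [comm1]; noncomm_ring
end

section
/- Let (V,q) be a non-degenerate quadratic space over a commutative ring R, and J a Z₂-graded two-sided ideal of the Clifford algebra Cl(V,q) with J ∩ R·1 = {0}. Then J = {0}. -/
noncomputable section CGIT

open CliffordAlgebra
set_option linter.unusedSectionVars false
set_option linter.unusedVariables false

variable {R V ι : Type*} [CommRing R] [AddCommGroup V] [Module R V]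
  [Fintype ι] [DecidableEq ι] [LinearOrder ι]
  (Q : QuadraticForm R V) (b : Module.Basis ι R V)

/-- Product of Clifford generators along a list of indices. -/
def cgitProd (l : List ι) : CliffordAlgebra Q :=
  (l.map fun i => CliffordAlgebra.ι Q (b i)).prod

@[simp] lemma cgitProd_nil : cgitProd Q b [] = 1 := rfl

@[simp] lemma cgitProd_cons (j : ι) (l : List ι) :
    cgitProd Q b (j :: l) = CliffordAlgebra.ι Q (b j) * cgitProd Q b l := by
  simp [cgitProd]

/-- The canonical (sorted) product of generators for a finite set of indices. -/
def cgitGen (S : Finset ι) : CliffordAlgebra Q := cgitProd Q b (S.sort (· ≤ ·))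

@[simp] lemma cgitGen_empty : cgitGen Q b ∅ = 1 := by
  simp [cgitGen]

@[simp] lemma cgitGen_singleton (i : ι) :
    cgitGen Q b {i} = CliffordAlgebra.ι Q (b i) := by
  simp [cgitGen, Finset.sort_singleton]

lemma cgitSort_erase (S : Finset ι) (i : ι) :
    (S.sort (· ≤ ·)).erase i = (S.erase i).sort (· ≤ ·) := by
  apply List.Perm.eq_of_pairwise' (r := (· ≤ ·))
  rotate_right 1
  · apply List.perm_iff_count.mpr
    intro a
    have h1 : (S.sort (· ≤ ·)).count a = S.val.count a := by
      conv_rhs => rw [← Finset.sort_eq S (· ≤ ·)]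
      exact (Multiset.coe_count a _).symm
    by_cases hai : a = i
    · subst hai
      rw [List.count_erase_self, h1]
      have h2 : ((S.erase a).sort (· ≤ ·)).count a = (S.erase a).val.count a := by
        conv_rhs => rw [← Finset.sort_eq (S.erase a) (· ≤ ·)]
        exact (Multiset.coe_count a _).symm
      rw [h2, Finset.erase_val, Multiset.count_erase_self]
    · rw [List.count_erase_of_ne hai]
      have h2 : ((S.erase i).sort (· ≤ ·)).count a = (S.erase i).val.count a := by
        conv_rhs => rw [← Finset.sort_eq (S.erase i) (· ≤ ·)]
        exact (Multiset.coe_count a _).symm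
      rw [h1, h2, Finset.erase_val, Multiset.count_erase_of_ne hai]
  · exact ((S.pairwise_sort (· ≤ ·)).sublist List.erase_sublist)
  · exact (S.erase i).pairwise_sort (· ≤ ·)

lemma cgitGen_insert (i : ι) (S : Finset ι) (hiS : i ∉ S) (hlt : ∀ x ∈ S, i ≤ x) :
    cgitGen Q b (insert i S) = CliffordAlgebra.ι Q (b i) * cgitGen Q b S := by
  rw [cgitGen, Finset.sort_insert _ hlt hiS, cgitProd_cons]
  rfl

lemma cgitGen_min (S : Finset ι) (h : S.Nonempty) :
    cgitGen Q b S = CliffordAlgebra.ι Q (b (S.min' h)) *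
      cgitGen Q b (S.erase (S.min' h)) := by
  conv_lhs => rw [← Finset.insert_erase (S.min'_mem h)]
  rw [cgitGen_insert]
  · exact Finset.notMem_erase _ _
  · intro x hx
    exact S.min'_le x (Finset.mem_of_mem_erase hx)

/-- Span of canonical products over sets of bounded cardinality. -/
def cgitL (m : ℕ) : Submodule R (CliffordAlgebra Q) :=
  Submodule.span R (cgitGen Q b '' {T | T.card ≤ m})

lemma cgitL_mono {m m' : ℕ} (h : m ≤ m') : cgitL Q b m ≤ cgitL Q b m' :=
  Submodule.span_mono (Set.image_mono fun T hT => le_trans hT h)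

lemma cgitGen_mem_L {S : Finset ι} {m : ℕ} (h : S.card ≤ m) :
    cgitGen Q b S ∈ cgitL Q b m :=
  Submodule.subset_span ⟨S, h, rfl⟩

/-- Key spanning lemma: multiplying a canonical product by a generator stays in the
span of canonical products over subsets of `insert i S`. -/
lemma cgit_mul_gen_mem (k : ℕ) :
    ∀ (S : Finset ι), S.card ≤ k → ∀ i : ι,
      CliffordAlgebra.ι Q (b i) * cgitGen Q b S ∈
        Submodule.span R (cgitGen Q b '' {T | T ⊆ insert i S}) := by
  induction k with
  | zero =>
    intro S hS i
    have hSe : S = ∅ := Finset.card_eq_zero.mp (Nat.le_zero.mp hS)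
    subst hSe
    rw [cgitGen_empty, mul_one, ← cgitGen_singleton Q b i]
    exact Submodule.subset_span ⟨{i}, by simp, rfl⟩
  | succ k IH =>
    intro S hS i
    rcases S.eq_empty_or_nonempty with hSe | hne
    · subst hSe
      rw [cgitGen_empty, mul_one, ← cgitGen_singleton Q b i]
      exact Submodule.subset_span ⟨{i}, by simp, rfl⟩
    · set j := S.min' hne with hj
      set S' := S.erase j with hS'
      have hjS : j ∈ S := S.min'_mem hne
      have hcS' : S'.card ≤ k := by
        rw [hS', Finset.card_erase_of_mem hjS]
        omega
      have hdecomp : cgitGen Q b S =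
          CliffordAlgebra.ι Q (b j) * cgitGen Q b S' := cgitGen_min Q b S hne
      have hjlt : ∀ x ∈ S', j < x := by
        intro x hx
        exact lt_of_le_of_ne (S.min'_le x (Finset.mem_of_mem_erase hx))
          (Ne.symm (Finset.ne_of_mem_erase hx))
      rcases lt_trichotomy i j with hij | hij | hij
      · have hiS : i ∉ S := fun hiS => absurd (S.min'_le i hiS) (not_le.mpr hij)
        have : CliffordAlgebra.ι Q (b i) * cgitGen Q b S = cgitGen Q b (insert i S) :=
          (cgitGen_insert Q b i S hiS (fun x hx => le_of_lt (lt_of_lt_of_le hij (S.min'_le x hx)))).symm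
        rw [this]
        exact Submodule.subset_span ⟨insert i S, fun x hx => hx, rfl⟩
      · subst hij
        rw [hdecomp, ← mul_assoc, ι_sq_scalar, ← Algebra.smul_def]
        refine Submodule.smul_mem _ _ (Submodule.subset_span ⟨S', ?_, rfl⟩)
        exact fun x hx => Finset.mem_insert_of_mem (Finset.mem_of_mem_erase hx)
      · have hswap : CliffordAlgebra.ι Q (b i) * CliffordAlgebra.ι Q (b j) =
            algebraMap R _ (QuadraticMap.polar Q (b i) (b j)) -
              CliffordAlgebra.ι Q (b j) * CliffordAlgebra.ι Q (b i) :=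
          eq_sub_of_add_eq (ι_mul_ι_add_swap (b i) (b j))
        rw [hdecomp, ← mul_assoc, hswap, sub_mul, ← Algebra.smul_def]
        refine Submodule.sub_mem _ ?_ ?_
        · refine Submodule.smul_mem _ _ (Submodule.subset_span ⟨S', ?_, rfl⟩)
          exact fun x hx => Finset.mem_insert_of_mem (Finset.mem_of_mem_erase hx)
        · rw [mul_assoc]
          have hin := IH S' hcS' i
          have hmap : ∀ y ∈ Submodule.span R (cgitGen Q b '' {T | T ⊆ insert i S'}),
              CliffordAlgebra.ι Q (b j) * y ∈
                Submodule.span R (cgitGen Q b '' {T | T ⊆ insert i S}) := by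
            intro y hy
            induction hy using Submodule.span_induction with
            | mem z hz =>
              obtain ⟨T, hT, rfl⟩ := hz
              have hjT : j ∉ T := by
                intro hjT
                rcases Finset.mem_insert.mp (hT hjT) with h | h
                · exact absurd h (ne_of_lt hij)
                · exact absurd (hjlt j h) (lt_irrefl j)
              have hle : ∀ x ∈ T, j ≤ x := by
                intro x hx
                rcases Finset.mem_insert.mp (hT hx) with h | h
                · exact le_of_lt (h ▸ hij)
                · exact le_of_lt (hjlt x h)
              rw [← cgitGen_insert Q b j T hjT hle]
              refine Submodule.subset_span ⟨insert j T, ?_, rfl⟩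
              intro x hx
              rcases Finset.mem_insert.mp hx with h | h
              · exact h ▸ Finset.mem_insert_of_mem hjS
              · rcases Finset.mem_insert.mp (hT h) with h' | h'
                · exact h' ▸ Finset.mem_insert_self i S
                · exact Finset.mem_insert_of_mem (Finset.mem_of_mem_erase h')
            | zero => rw [mul_zero]; exact Submodule.zero_mem _
            | add u v _ _ hu hv => rw [mul_add]; exact Submodule.add_mem _ hu hv
            | smul r u _ hu => rw [mul_smul_comm]; exact Submodule.smul_mem _ _ hu
          exact hmap _ hin

lemma cgit_mul_gen_mem_range (S : Finset ι) (i : ι) :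
    CliffordAlgebra.ι Q (b i) * cgitGen Q b S ∈
      Submodule.span R (Set.range (cgitGen Q b)) := by
  exact Submodule.span_mono
    (Set.image_subset_range (cgitGen Q b) {T | T ⊆ insert i S})
    (cgit_mul_gen_mem Q b S.card S le_rfl i)

lemma cgit_mul_L {i : ι} {m : ℕ} {x : CliffordAlgebra Q} (hx : x ∈ cgitL Q b m) :
    CliffordAlgebra.ι Q (b i) * x ∈ cgitL Q b (m + 1) := by
  induction hx using Submodule.span_induction with
  | mem z hz =>
    obtain ⟨T, hT, rfl⟩ := hz
    refine Submodule.span_le.mpr ?_ (cgit_mul_gen_mem Q b T.card T le_rfl i)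
    rintro _ ⟨U, hU, rfl⟩
    refine Submodule.subset_span ⟨U, ?_, rfl⟩
    calc U.card ≤ (insert i T).card := Finset.card_le_card hU
    _ ≤ T.card + 1 := Finset.card_insert_le i T
    _ ≤ m + 1 := by
        have hT' : T.card ≤ m := hT
        omega
  | zero => rw [mul_zero]; exact Submodule.zero_mem _
  | add u v _ _ hu hv => rw [mul_add]; exact Submodule.add_mem _ hu hv
  | smul r u _ hu => rw [mul_smul_comm]; exact Submodule.smul_mem _ _ hu

lemma cgitProd_mem_L (l : List ι) : cgitProd Q b l ∈ cgitL Q b l.length := by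
  induction l with
  | nil => simpa using cgitGen_mem_L Q b (S := ∅) (by simp)
  | cons j t ih =>
    rw [cgitProd_cons]
    exact cgit_mul_L Q b ih

lemma cgit_mul_span {v : V} {y : CliffordAlgebra Q}
    (hy : y ∈ Submodule.span R (Set.range (cgitGen Q b))) :
    CliffordAlgebra.ι Q v * y ∈ Submodule.span R (Set.range (cgitGen Q b)) := by
  have hgen : ∀ (i : ι) (z : CliffordAlgebra Q),
      z ∈ Submodule.span R (Set.range (cgitGen Q b)) →
      CliffordAlgebra.ι Q (b i) * z ∈ Submodule.span R (Set.range (cgitGen Q b)) := by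
    intro i z hz
    induction hz using Submodule.span_induction with
    | mem w hw =>
      obtain ⟨T, rfl⟩ := hw
      exact cgit_mul_gen_mem_range Q b T i
    | zero => rw [mul_zero]; exact Submodule.zero_mem _
    | add u w _ _ hu hw => rw [mul_add]; exact Submodule.add_mem _ hu hw
    | smul r u _ hu => rw [mul_smul_comm]; exact Submodule.smul_mem _ _ hu
  have hrw : CliffordAlgebra.ι Q v * y =
      ∑ i, b.repr v i • (CliffordAlgebra.ι Q (b i) * y) := by
    conv_lhs => rw [← Module.Basis.sum_repr b v]
    rw [map_sum, Finset.sum_mul]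
    exact Finset.sum_congr rfl fun i _ => by
      rw [LinearMap.map_smul, smul_mul_assoc]
  rw [hrw]
  exact Submodule.sum_mem _ fun i _ => Submodule.smul_mem _ _ (hgen i y hy)

lemma cgit_span_top :
    Submodule.span R (Set.range (cgitGen Q b)) = ⊤ := by
  suffices h : ∀ x : CliffordAlgebra Q,
      x ∈ Submodule.span R (Set.range (cgitGen Q b)) by
    rw [eq_top_iff]; exact fun x _ => h x
  intro x
  set P := Submodule.span R (Set.range (cgitGen Q b)) with hP
  have h1 : (1 : CliffordAlgebra Q) ∈ P := by
    rw [← cgitGen_empty Q b]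
    exact Submodule.subset_span ⟨∅, rfl⟩
  have hprod : ∀ (l : List ι) (y : CliffordAlgebra Q), y ∈ P →
      cgitProd Q b l * y ∈ P := by
    intro l
    induction l with
    | nil => intro y hy; simpa using hy
    | cons j t ih =>
      intro y hy
      rw [cgitProd_cons, mul_assoc]
      exact cgit_mul_span Q b (ih y hy)
  have hmul : ∀ x y : CliffordAlgebra Q, x ∈ P → y ∈ P → x * y ∈ P := by
    intro x y hx hy
    induction hx using Submodule.span_induction with
    | mem w hw =>
      obtain ⟨T, rfl⟩ := hw
      exact hprod _ y hy
    | zero => rw [zero_mul]; exact Submodule.zero_mem _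
    | add u w _ _ hu hw => rw [add_mul]; exact Submodule.add_mem _ hu hw
    | smul r u _ hu => rw [smul_mul_assoc]; exact Submodule.smul_mem _ _ hu
  induction x using CliffordAlgebra.induction with
  | algebraMap r =>
    rw [Algebra.algebraMap_eq_smul_one]
    exact Submodule.smul_mem _ _ h1
  | ι v =>
    rw [← mul_one (CliffordAlgebra.ι Q v)]
    exact cgit_mul_span Q b h1
  | mul x y hx hy => exact hmul x y hx hy
  | add x y hx hy => exact Submodule.add_mem _ hx hy

section Derivation

variable {Q b}
variable (δ : CliffordAlgebra Q →ₗ[R] CliffordAlgebra Q) (g : ι → R)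
  (h1 : δ 1 = 0)
  (hd : ∀ (j : ι) (x : CliffordAlgebra Q),
    δ (CliffordAlgebra.ι Q (b j) * x) = g j • x - CliffordAlgebra.ι Q (b j) * δ x)

include h1 hd

lemma cgit_der_zero : ∀ l : List ι, (∀ j ∈ l, g j = 0) → δ (cgitProd Q b l) = 0 := by
  intro l
  induction l with
  | nil => intro _; simpa using h1
  | cons j t ih =>
    intro hg
    rw [cgitProd_cons, hd, ih (fun k hk => hg k (List.mem_cons_of_mem j hk)),
      hg j List.mem_cons_self, zero_smul, mul_zero, sub_zero]

lemma cgit_der_erase (i : ι) (hg : ∀ j, j ≠ i → g j = 0) :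
    ∀ l : List ι, l.Nodup → i ∈ l → ∃ u : R, (u = 1 ∨ u = -1) ∧
      δ (cgitProd Q b l) = (u * g i) • cgitProd Q b (l.erase i) := by
  intro l
  induction l with
  | nil => intro _ h; exact absurd h List.not_mem_nil
  | cons j t ih =>
    intro hnd hmem
    have hjt : j ∉ t := (List.nodup_cons.mp hnd).1
    have hndt : t.Nodup := (List.nodup_cons.mp hnd).2
    by_cases hij : i = j
    · subst hij
      have hzero : δ (cgitProd Q b t) = 0 :=
        cgit_der_zero δ g h1 hd t (fun k hk => hg k (fun h => (h ▸ hjt) hk))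
      refine ⟨1, Or.inl rfl, ?_⟩
      rw [cgitProd_cons, hd, hzero, mul_zero, sub_zero, List.erase_cons_head, one_mul]
    · have hit : i ∈ t := by
        rcases List.mem_cons.mp hmem with h | h
        · exact absurd h hij
        · exact h
      obtain ⟨u, hu, hδ⟩ := ih hndt hit
      refine ⟨-u, ?_, ?_⟩
      · rcases hu with h | h
        · exact Or.inr (by rw [h])
        · exact Or.inl (by rw [h, neg_neg])
      · have herase : (j :: t).erase i = j :: t.erase i :=
          List.erase_cons_tail (by simpa using fun h : j = i => hij h.symm)
        rw [cgitProd_cons, hd, hδ, hg j (fun h => hij (h.symm)), zero_smul, zero_sub,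
          herase, cgitProd_cons, mul_smul_comm, ← neg_smul, neg_mul]

lemma cgit_der_lower : ∀ l : List ι, δ (cgitProd Q b l) ∈ cgitL Q b (l.length - 1) := by
  intro l
  induction l with
  | nil =>
    simp only [cgitProd_nil, h1]
    exact Submodule.zero_mem _
  | cons j t ih =>
    rw [cgitProd_cons, hd]
    refine Submodule.sub_mem _ ?_ ?_
    · refine Submodule.smul_mem _ _ ?_
      have := cgitProd_mem_L Q b t
      simpa using this
    · rcases t with _ | ⟨k, t'⟩
      · simp only [cgitProd_nil, h1, mul_zero]
        exact Submodule.zero_mem _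
      · have h2 := cgit_mul_L Q b (i := j) ih
        have h3 : (k :: t').length - 1 + 1 = (j :: k :: t').length - 1 := by
          simp
        rw [h3] at h2
        exact h2

end Derivation

/-! ### The Fock-type representation of `CliffordAlgebra Q` on `CliffordAlgebra 0` -/

/-- Creation plus annihilation operator. -/
def cgitRho (B : LinearMap.BilinMap R V R) :
    V →ₗ[R] Module.End R (CliffordAlgebra (0 : QuadraticForm R V)) where
  toFun v := LinearMap.mulLeft R (CliffordAlgebra.ι (0 : QuadraticForm R V) v) +
    CliffordAlgebra.contractLeft (B v)
  map_add' v w := by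
    refine LinearMap.ext fun m => ?_
    simp only [map_add, LinearMap.add_apply, LinearMap.mulLeft_apply, add_mul]
    abel
  map_smul' r v := by
    refine LinearMap.ext fun m => ?_
    simp only [map_smul, LinearMap.smul_apply, LinearMap.add_apply,
      LinearMap.mulLeft_apply, RingHom.id_apply, smul_mul_assoc, smul_add]

lemma cgitRho_apply (B : LinearMap.BilinMap R V R) (v : V)
    (m : CliffordAlgebra (0 : QuadraticForm R V)) :
    cgitRho B v m = CliffordAlgebra.ι (0 : QuadraticForm R V) v * m +
      CliffordAlgebra.contractLeft (B v) m := rfl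

lemma cgitRho_sq (B : LinearMap.BilinMap R V R) (hB : ∀ v, B v v = Q v) (v : V) :
    cgitRho (V := V) B v * cgitRho B v =
      algebraMap R (Module.End R (CliffordAlgebra (0 : QuadraticForm R V))) (Q v) := by
  refine LinearMap.ext fun m => ?_
  rw [Module.End.mul_apply, Module.algebraMap_end_apply, cgitRho_apply, cgitRho_apply]
  rw [mul_add, ← mul_assoc, ι_sq_scalar, map_add, contractLeft_ι_mul,
    contractLeft_contractLeft]
  simp only [QuadraticMap.zero_apply, map_zero, zero_mul, zero_add, hB]
  abel

/-- The representation of the Clifford algebra. -/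
def cgitF (B : LinearMap.BilinMap R V R) (hB : ∀ v, B v v = Q v) :
    CliffordAlgebra Q →ₐ[R] Module.End R (CliffordAlgebra (0 : QuadraticForm R V)) :=
  CliffordAlgebra.lift Q ⟨cgitRho B, cgitRho_sq Q B hB⟩

/-- Evaluation at "vacuum". -/
def cgitPhi (B : LinearMap.BilinMap R V R) (hB : ∀ v, B v v = Q v) :
    CliffordAlgebra Q →ₗ[R] CliffordAlgebra (0 : QuadraticForm R V) where
  toFun x := cgitF Q B hB x 1
  map_add' x y := by simp only [map_add, LinearMap.add_apply]
  map_smul' r x := by simp only [map_smul, LinearMap.smul_apply, RingHom.id_apply]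

@[simp] lemma cgitPhi_one (B : LinearMap.BilinMap R V R) (hB : ∀ v, B v v = Q v) :
    cgitPhi Q B hB 1 = 1 := by
  simp only [cgitPhi, LinearMap.coe_mk, AddHom.coe_mk, map_one, Module.End.one_apply]

lemma cgitPhi_ι_mul (B : LinearMap.BilinMap R V R) (hB : ∀ v, B v v = Q v)
    (v : V) (x : CliffordAlgebra Q) :
    cgitPhi Q B hB (CliffordAlgebra.ι Q v * x) =
      CliffordAlgebra.ι (0 : QuadraticForm R V) v * cgitPhi Q B hB x +
        CliffordAlgebra.contractLeft (B v) (cgitPhi Q B hB x) := by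
  simp only [cgitPhi, LinearMap.coe_mk, AddHom.coe_mk, map_mul, Module.End.mul_apply]
  rw [cgitF, CliffordAlgebra.lift_ι_apply, cgitRho_apply]

/-- The augmentation (scalar part) of the exterior algebra. -/
def cgitAug : CliffordAlgebra (0 : QuadraticForm R V) →ₐ[R] R :=
  CliffordAlgebra.lift (0 : QuadraticForm R V)
    ⟨0, fun m => by simp only [LinearMap.zero_apply, mul_zero, QuadraticMap.zero_apply,
      map_zero]⟩

@[simp] lemma cgitAug_ι (v : V) :
    cgitAug (V := V) (R := R) (CliffordAlgebra.ι (0 : QuadraticForm R V) v) = 0 := by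
  simp only [cgitAug, CliffordAlgebra.lift_ι_apply, LinearMap.zero_apply]

@[simp] lemma cgitAug_one : cgitAug (V := V) (R := R) 1 = 1 := map_one _

lemma cgitAug_gen (T : Finset ι) :
    cgitAug (cgitGen (0 : QuadraticForm R V) b T) = if T = ∅ then 1 else 0 := by
  by_cases hT : T = ∅
  · subst hT; simp
  · rw [if_neg hT]
    obtain hne := Finset.nonempty_of_ne_empty hT
    rw [cgitGen_min _ _ _ hne, map_mul, cgitAug_ι, zero_mul]

/-- Iterated contraction along a list of indices. -/
def cgitDelta (l : List ι) :
    CliffordAlgebra (0 : QuadraticForm R V) →ₗ[R] CliffordAlgebra (0 : QuadraticForm R V) :=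
  l.foldr (fun j acc => acc ∘ₗ CliffordAlgebra.contractLeft (b.coord j)) LinearMap.id

@[simp] lemma cgitDelta_nil : cgitDelta b ([] : List ι) = LinearMap.id := rfl

lemma cgitDelta_cons (j : ι) (t : List ι) :
    cgitDelta b (j :: t) = cgitDelta b t ∘ₗ CliffordAlgebra.contractLeft (b.coord j) := rfl

lemma cgit_coord_apply (j k : ι) : b.coord j (b k) = if k = j then 1 else 0 := by
  rw [Module.Basis.coord_apply, Module.Basis.repr_self, Finsupp.single_apply]

lemma cgit_ctr_der (j : ι) (k : ι) (x : CliffordAlgebra (0 : QuadraticForm R V)) :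
    CliffordAlgebra.contractLeft (b.coord j)
        (CliffordAlgebra.ι (0 : QuadraticForm R V) (b k) * x) =
      (if k = j then (1 : R) else 0) • x -
        CliffordAlgebra.ι (0 : QuadraticForm R V) (b k)
          * CliffordAlgebra.contractLeft (b.coord j) x := by
  rw [contractLeft_ι_mul, cgit_coord_apply]

lemma cgitDelta_gen : ∀ l : List ι, l.Nodup → ∀ T : Finset ι, ∃ r : R,
    cgitDelta b l (cgitGen (0 : QuadraticForm R V) b T) =
      r • cgitGen (0 : QuadraticForm R V) b (T \ l.toFinset) ∧
    (¬ l.toFinset ⊆ T → r = 0) ∧ (T = l.toFinset → (r = 1 ∨ r = -1)) := by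
  intro l
  induction l with
  | nil =>
    intro _ T
    refine ⟨1, by simp, fun h => absurd (Finset.empty_subset T) (by simpa using h),
      fun _ => Or.inl rfl⟩
  | cons j t ih =>
    intro hnd T
    have hjt : j ∉ t := (List.nodup_cons.mp hnd).1
    have hndt : t.Nodup := (List.nodup_cons.mp hnd).2
    by_cases hjT : j ∈ T
    · obtain ⟨u, hu, hctr⟩ := cgit_der_erase (Q := (0 : QuadraticForm R V)) (b := b)
        (CliffordAlgebra.contractLeft (b.coord j)) (fun k => if k = j then 1 else 0)
        (contractLeft_one _ _) (cgit_ctr_der b j) j (fun k hk => if_neg hk)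
        (T.sort (· ≤ ·)) (T.sort_nodup _) ((Finset.mem_sort (· ≤ ·)).mpr hjT)
      rw [if_pos rfl, mul_one, cgitSort_erase] at hctr
      obtain ⟨r', h1', h2', h3'⟩ := ih hndt (T.erase j)
      have hsd : (T.erase j) \ t.toFinset = T \ (j :: t).toFinset := by
        ext a
        simp only [Finset.mem_sdiff, Finset.mem_erase, List.toFinset_cons,
          Finset.mem_insert, not_or]
        tauto
      refine ⟨u * r', ?_, ?_, ?_⟩
      · rw [cgitDelta_cons, LinearMap.comp_apply]
        show cgitDelta b t (CliffordAlgebra.contractLeft (b.coord j)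
          (cgitGen (0 : QuadraticForm R V) b T)) = _
        rw [show CliffordAlgebra.contractLeft (b.coord j)
            (cgitGen (0 : QuadraticForm R V) b T) =
            u • cgitGen (0 : QuadraticForm R V) b (T.erase j) from hctr,
          map_smul, h1', smul_smul, hsd]
      · intro hns
        have h2'' : ¬ t.toFinset ⊆ T.erase j := by
          intro hsub
          apply hns
          rw [List.toFinset_cons]
          intro a ha
          rcases Finset.mem_insert.mp ha with rfl | ha'
          · exact hjT
          · exact Finset.mem_of_mem_erase (hsub ha')
        rw [h2' h2'', mul_zero]
      · intro hT
        have hjtF : j ∉ t.toFinset := by simpa using hjt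
        have : T.erase j = t.toFinset := by
          rw [hT, List.toFinset_cons, Finset.erase_insert hjtF]
        rcases h3' this with h | h <;> rcases hu with h' | h' <;>
          simp [h, h']
    · have hzero : CliffordAlgebra.contractLeft (b.coord j)
          (cgitGen (0 : QuadraticForm R V) b T) = 0 := by
        refine cgit_der_zero (Q := (0 : QuadraticForm R V)) (b := b)
          (CliffordAlgebra.contractLeft (b.coord j)) (fun k => if k = j then 1 else 0)
          (contractLeft_one _ _) (cgit_ctr_der b j) (T.sort (· ≤ ·)) ?_
        intro k hk
        refine if_neg ?_
        rintro rfl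
        exact hjT ((Finset.mem_sort (α := ι) (· ≤ ·)).mp hk)
      refine ⟨0, ?_, fun _ => rfl, ?_⟩
      · rw [cgitDelta_cons, LinearMap.comp_apply]
        show cgitDelta b t (CliffordAlgebra.contractLeft (b.coord j)
          (cgitGen (0 : QuadraticForm R V) b T)) = _
        rw [hzero, map_zero, zero_smul]
      · intro hT
        exfalso
        apply hjT
        rw [hT, List.toFinset_cons]
        exact Finset.mem_insert_self j _

/-- The functional extracting the coefficient of `cgitGen 0 b S`. -/
def cgitLam (S : Finset ι) :
    CliffordAlgebra (0 : QuadraticForm R V) →ₗ[R] R :=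
  (cgitAug (V := V) (R := R)).toLinearMap ∘ₗ cgitDelta b (S.sort (· ≤ ·))

lemma cgitLam_gen_ne (S T : Finset ι) (h : T ≠ S) :
    cgitLam b S (cgitGen (0 : QuadraticForm R V) b T) = 0 := by
  obtain ⟨r, hr, h0, _⟩ := cgitDelta_gen b (S.sort (· ≤ ·)) (S.sort_nodup _) T
  rw [Finset.sort_toFinset] at h0
  rw [cgitLam, LinearMap.comp_apply, hr, map_smul, Finset.sort_toFinset, smul_eq_mul,
    AlgHom.toLinearMap_apply, cgitAug_gen]
  by_cases hTS : T \ S = ∅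
  · have hsub : T ⊆ S := by
      intro a ha
      by_contra hna
      exact (Finset.notMem_empty a) (hTS ▸ Finset.mem_sdiff.mpr ⟨ha, hna⟩)
    have : ¬ S ⊆ T := fun hST => h (Finset.Subset.antisymm hsub hST)
    rw [h0 this, zero_mul]
  · rw [if_neg hTS, mul_zero]

lemma cgitLam_gen_self (S : Finset ι) :
    ∃ u : R, (u = 1 ∨ u = -1) ∧
      cgitLam b S (cgitGen (0 : QuadraticForm R V) b S) = u := by
  obtain ⟨r, hr, _, h1⟩ := cgitDelta_gen b (S.sort (· ≤ ·)) (S.sort_nodup _) S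
  rw [Finset.sort_toFinset] at h1
  refine ⟨r, h1 rfl, ?_⟩
  rw [cgitLam, LinearMap.comp_apply, hr, map_smul, Finset.sort_toFinset, smul_eq_mul,
    AlgHom.toLinearMap_apply, Finset.sdiff_self, cgitAug_gen, if_pos rfl, mul_one]

lemma cgitLam_vanish (S : Finset ι) {m : ℕ} (hm : m < S.card)
    {x : CliffordAlgebra (0 : QuadraticForm R V)}
    (hx : x ∈ cgitL (0 : QuadraticForm R V) b m) :
    cgitLam b S x = 0 := by
  induction hx using Submodule.span_induction with
  | mem z hz =>
    obtain ⟨U, hU, rfl⟩ := hz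
    refine cgitLam_gen_ne b S U ?_
    intro hUS
    subst hUS
    exact absurd hU (not_le.mpr hm)
  | zero => exact map_zero _
  | add u v _ _ hu hv => rw [map_add, hu, hv, add_zero]
  | smul r u _ hu => rw [map_smul, hu, smul_zero]

lemma cgit_ctr_L (f : Module.Dual R V) {m : ℕ}
    {x : CliffordAlgebra (0 : QuadraticForm R V)}
    (hx : x ∈ cgitL (0 : QuadraticForm R V) b m) :
    CliffordAlgebra.contractLeft f x ∈ cgitL (0 : QuadraticForm R V) b m := by
  induction hx using Submodule.span_induction with
  | mem z hz =>
    obtain ⟨U, hU, rfl⟩ := hz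
    have := cgit_der_lower (Q := (0 : QuadraticForm R V)) (b := b)
      (CliffordAlgebra.contractLeft f) (fun k => f (b k))
      (contractLeft_one _ _) (fun j x => by exact contractLeft_ι_mul (Q := (0 : QuadraticForm R V)) f (b j) x) (U.sort (· ≤ ·))
    rw [Finset.length_sort] at this
    have hU' : U.card ≤ m := hU
    exact cgitL_mono _ _ (by omega : U.card - 1 ≤ m) this
  | zero => rw [map_zero]; exact Submodule.zero_mem _
  | add u v _ _ hu hv => rw [map_add]; exact Submodule.add_mem _ hu hv
  | smul r u _ hu => rw [map_smul]; exact Submodule.smul_mem _ _ hu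

lemma cgitPhi_prod (B : LinearMap.BilinMap R V R) (hB : ∀ v, B v v = Q v) :
    ∀ l : List ι, ∃ err,
      cgitPhi Q B hB (cgitProd Q b l) = cgitProd (0 : QuadraticForm R V) b l + err ∧
      err ∈ cgitL (0 : QuadraticForm R V) b (l.length - 1) ∧ (l = [] → err = 0) := by
  intro l
  induction l with
  | nil =>
    exact ⟨0, by simp, Submodule.zero_mem _, fun _ => rfl⟩
  | cons j t ih =>
    obtain ⟨err, heq, hmem, hnil0⟩ := ih
    refine ⟨CliffordAlgebra.ι (0 : QuadraticForm R V) (b j) * err +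
      CliffordAlgebra.contractLeft (B (b j)) (cgitProd (0 : QuadraticForm R V) b t) +
      CliffordAlgebra.contractLeft (B (b j)) err, ?_, ?_, fun h => absurd h (by simp)⟩
    · rw [cgitProd_cons, cgitPhi_ι_mul, heq, cgitProd_cons]
      rw [mul_add, map_add]
      abel
    · have hlen : (j :: t).length - 1 = t.length := rfl
      rw [hlen]
      refine Submodule.add_mem _ (Submodule.add_mem _ ?_ ?_) ?_
      · rcases t with _ | ⟨k, t'⟩
        · rw [hnil0 rfl, mul_zero]
          exact Submodule.zero_mem _
        · have h2 := cgit_mul_L (0 : QuadraticForm R V) b (i := j) hmem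
          have : (k :: t').length - 1 + 1 = (k :: t').length := by simp
          rw [this] at h2
          exact h2
      · have := cgit_der_lower (Q := (0 : QuadraticForm R V)) (b := b)
          (CliffordAlgebra.contractLeft (B (b j))) (fun k => B (b j) (b k))
          (contractLeft_one _ _) (fun i x => by exact contractLeft_ι_mul (Q := (0 : QuadraticForm R V)) (B (b j)) (b i) x) t
        exact cgitL_mono _ _ (by omega) this
      · exact cgitL_mono _ _ (by omega) (cgit_ctr_L b _ hmem)

/-- The coefficient functionals on `CliffordAlgebra Q`. -/
def cgitMu (B : LinearMap.BilinMap R V R) (hB : ∀ v, B v v = Q v) (S : Finset ι) :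
    CliffordAlgebra Q →ₗ[R] R :=
  cgitLam b S ∘ₗ cgitPhi Q B hB

lemma cgitMu_gen_ne (B : LinearMap.BilinMap R V R) (hB : ∀ v, B v v = Q v)
    (S T : Finset ι) (hc : T.card ≤ S.card) (hne : T ≠ S) :
    cgitMu Q b B hB S (cgitGen Q b T) = 0 := by
  obtain ⟨err, heq, hmem, hnil⟩ := cgitPhi_prod Q b B hB (T.sort (· ≤ ·))
  rw [cgitMu, LinearMap.comp_apply]
  rw [show cgitGen Q b T = cgitProd Q b (T.sort (· ≤ ·)) from rfl, heq, map_add]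
  have h1 : cgitLam b S (cgitProd (0 : QuadraticForm R V) b (T.sort (· ≤ ·))) = 0 :=
    cgitLam_gen_ne b S T hne
  have h2 : cgitLam b S err = 0 := by
    by_cases hT : T = ∅
    · rw [hnil (by rw [hT, Finset.sort_empty]), map_zero]
    · have hTcard : 0 < T.card := Finset.card_pos.mpr (Finset.nonempty_of_ne_empty hT)
      rw [Finset.length_sort] at hmem
      exact cgitLam_vanish b S (by omega) hmem
  rw [h1, h2, add_zero]

lemma cgitMu_gen_self (B : LinearMap.BilinMap R V R) (hB : ∀ v, B v v = Q v)
    (S : Finset ι) :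
    ∃ u : R, (u = 1 ∨ u = -1) ∧ cgitMu Q b B hB S (cgitGen Q b S) = u := by
  obtain ⟨err, heq, hmem, hnil⟩ := cgitPhi_prod Q b B hB (S.sort (· ≤ ·))
  obtain ⟨u, hu, hlam⟩ := cgitLam_gen_self b S
  refine ⟨u, hu, ?_⟩
  rw [cgitMu, LinearMap.comp_apply]
  rw [show cgitGen Q b S = cgitProd Q b (S.sort (· ≤ ·)) from rfl, heq, map_add]
  have h2 : cgitLam b S err = 0 := by
    by_cases hS : S = ∅
    · rw [hnil (by rw [hS, Finset.sort_empty]), map_zero]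
    · have hScard : 0 < S.card := Finset.card_pos.mpr (Finset.nonempty_of_ne_empty hS)
      rw [Finset.length_sort] at hmem
      exact cgitLam_vanish b S (by omega) hmem
  rw [h2, add_zero]
  exact hlam

lemma cgit_indep (B : LinearMap.BilinMap R V R) (hB : ∀ v, B v v = Q v) :
    LinearIndependent R (cgitGen Q b) := by
  rw [linearIndependent_iff']
  intro s g hsum S hS
  have extract : ∀ T ∈ s, (∀ U ∈ s, T.card < U.card → g U = 0) → g T = 0 := by
    intro T hT hhigh
    obtain ⟨u, hu, hself⟩ := cgitMu_gen_self Q b B hB T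
    have h0 : cgitMu Q b B hB T (∑ U ∈ s, g U • cgitGen Q b U) = 0 := by
      rw [hsum, map_zero]
    rw [map_sum] at h0
    have hterm : ∀ U ∈ s, cgitMu Q b B hB T (g U • cgitGen Q b U) =
        if U = T then g T * u else 0 := by
      intro U hU
      rw [map_smul, smul_eq_mul]
      by_cases hUT : U = T
      · subst hUT; rw [if_pos rfl, hself]
      · rw [if_neg hUT]
        by_cases hcard : U.card ≤ T.card
        · rw [cgitMu_gen_ne Q b B hB T U hcard hUT, mul_zero]
        · rw [hhigh U hU (by omega), zero_mul]
    rw [Finset.sum_congr rfl hterm, Finset.sum_ite_eq' s T (fun _ => g T * u),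
      if_pos hT] at h0
    rcases hu with rfl | rfl
    · rwa [mul_one] at h0
    · rw [mul_neg, mul_one, neg_eq_zero] at h0; exact h0
  have key : ∀ d : ℕ, ∀ T ∈ s, Fintype.card ι ≤ T.card + d → g T = 0 := by
    intro d
    induction d with
    | zero =>
      intro T hT hc
      refine extract T hT fun U hU hlt => ?_
      exfalso
      have hUcard : U.card ≤ Fintype.card ι := Finset.card_le_univ U
      omega
    | succ d ihd =>
      intro T hT hc
      by_cases hd' : Fintype.card ι ≤ T.card + d
      · exact ihd T hT hd'
      · refine extract T hT fun U hU hlt => ihd U hU (by omega)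
  exact key (Fintype.card ι) S hS (Nat.le_add_left _ _)

/-- The basis of the Clifford algebra given by sorted products of generators. -/
def cgitBasis (B : LinearMap.BilinMap R V R) (hB : ∀ v, B v v = Q v) :
    Module.Basis (Finset ι) R (CliffordAlgebra Q) :=
  Module.Basis.mk (cgit_indep Q b B hB) (le_of_eq (cgit_span_top Q b).symm)

@[simp] lemma cgitBasis_apply (B : LinearMap.BilinMap R V R) (hB : ∀ v, B v v = Q v)
    (T : Finset ι) : cgitBasis Q b B hB T = cgitGen Q b T := Module.Basis.mk_apply _ _ _

/-- The graded contraction (super-commutator with `ι Q v`). -/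
def cgitDer (v : V) : CliffordAlgebra Q →ₗ[R] CliffordAlgebra Q :=
  LinearMap.mulLeft R (CliffordAlgebra.ι Q v) -
    (LinearMap.mulRight R (CliffordAlgebra.ι Q v)).comp
      (CliffordAlgebra.involute (Q := Q)).toLinearMap

lemma cgitDer_apply (v : V) (x : CliffordAlgebra Q) :
    cgitDer Q v x = CliffordAlgebra.ι Q v * x -
      CliffordAlgebra.involute x * CliffordAlgebra.ι Q v := rfl

lemma cgitDer_one (v : V) : cgitDer Q v 1 = 0 := by
  rw [cgitDer_apply, map_one, mul_one, one_mul, sub_self]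

lemma cgitDer_ι_mul (v w : V) (x : CliffordAlgebra Q) :
    cgitDer Q v (CliffordAlgebra.ι Q w * x) =
      QuadraticMap.polar Q v w • x - CliffordAlgebra.ι Q w * cgitDer Q v x := by
  have hsw : CliffordAlgebra.ι Q v * CliffordAlgebra.ι Q w =
      algebraMap R _ (QuadraticMap.polar Q v w) -
        CliffordAlgebra.ι Q w * CliffordAlgebra.ι Q v :=
    eq_sub_of_add_eq (ι_mul_ι_add_swap v w)
  rw [cgitDer_apply, cgitDer_apply]
  calc CliffordAlgebra.ι Q v * (CliffordAlgebra.ι Q w * x) -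
      CliffordAlgebra.involute (CliffordAlgebra.ι Q w * x) * CliffordAlgebra.ι Q v
      = (CliffordAlgebra.ι Q v * CliffordAlgebra.ι Q w) * x -
        ((-CliffordAlgebra.ι Q w) * CliffordAlgebra.involute x) * CliffordAlgebra.ι Q v := by
        rw [map_mul, involute_ι]; noncomm_ring
    _ = (algebraMap R _ (QuadraticMap.polar Q v w) -
          CliffordAlgebra.ι Q w * CliffordAlgebra.ι Q v) * x +
        CliffordAlgebra.ι Q w * (CliffordAlgebra.involute x * CliffordAlgebra.ι Q v) := by
        rw [hsw, neg_mul, neg_mul, sub_neg_eq_add, mul_assoc]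
    _ = QuadraticMap.polar Q v w • x -
          CliffordAlgebra.ι Q w * (CliffordAlgebra.ι Q v * x) +
        CliffordAlgebra.ι Q w * (CliffordAlgebra.involute x * CliffordAlgebra.ι Q v) := by
        rw [sub_mul, ← Algebra.smul_def, mul_assoc]
    _ = QuadraticMap.polar Q v w • x - CliffordAlgebra.ι Q w *
          (CliffordAlgebra.ι Q v * x -
            CliffordAlgebra.involute x * CliffordAlgebra.ι Q v) := by
        rw [mul_sub]; abel

end CGIT

/-- If (V,q) is non-degenerate (the Gram determinant of the polar
form w.r.t. a basis is a non-zero-divisor) and J is a Z₂-graded two-sided ideal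
of Cl(V,q) with J ∩ R·1 = {0}, then J = {0}. -/
theorem clifford_graded_ideal_trivial {R V ι : Type*} [CommRing R]
    [AddCommGroup V] [Module R V] [Fintype ι] [DecidableEq ι]
    (Q : QuadraticForm R V) (b : Module.Basis ι R V)
    (hnd : (Matrix.of fun i j => QuadraticMap.polar Q (b i) (b j)).det ∈
      nonZeroDivisors R)
    (J : TwoSidedIdeal (CliffordAlgebra Q))
    (hgraded : ∀ x ∈ J, ∃ x₀ ∈ J, ∃ x₁ ∈ J,
      x₀ ∈ CliffordAlgebra.evenOdd Q 0 ∧ x₁ ∈ CliffordAlgebra.evenOdd Q 1 ∧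
        x = x₀ + x₁)
    (hR : ∀ r : R, algebraMap R (CliffordAlgebra Q) r ∈ J → r = 0) :
    ∀ x ∈ J, x = 0 := by
  classical
  letI : LinearOrder ι := IsWellOrder.linearOrder WellOrderingRel
  haveI : Module.Free R V := Module.Free.of_basis b
  obtain ⟨B, hBQ⟩ := LinearMap.BilinMap.toQuadraticMap_surjective (R := R) (M := V)
    (N := R) Q
  have hB : ∀ v, B v v = Q v := fun v => by
    rw [← hBQ]; rfl
  set eb := cgitBasis Q b B hB with heb
  set G : Matrix ι ι R := Matrix.of fun i j => QuadraticMap.polar Q (b i) (b j) with hG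
  -- the "adjugate dual" vectors
  set fv : ι → V := fun i => ∑ j, G.adjugate j i • b j with hfv
  have hGsymm : G.transpose = G := by
    ext j k
    simp only [Matrix.transpose_apply, hG, Matrix.of_apply]
    exact QuadraticMap.polar_comm _ _ _
  have hadj : ∀ j i, G.adjugate j i = G.adjugate i j := by
    intro j i
    conv_lhs => rw [← Matrix.transpose_apply G.adjugate i j,
      Matrix.adjugate_transpose, hGsymm]
  have hpolar_fv : ∀ i k, QuadraticMap.polar Q (fv i) (b k) =
      if k = i then G.det else 0 := by
    intro i k
    have hsum : QuadraticMap.polar Q (fv i) (b k) =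
        ∑ j, G.adjugate j i * QuadraticMap.polar Q (b j) (b k) := by
      rw [hfv]
      rw [← QuadraticMap.polarBilin_apply_apply, map_sum, LinearMap.sum_apply]
      refine Finset.sum_congr rfl fun j _ => ?_
      rw [map_smul, LinearMap.smul_apply, smul_eq_mul,
        QuadraticMap.polarBilin_apply_apply]
    rw [hsum]
    have hstep : ∀ j, G.adjugate j i * QuadraticMap.polar Q (b j) (b k) =
        G.adjugate i j * G j k := fun j => by rw [hadj j i]; rfl
    rw [Finset.sum_congr rfl fun j _ => hstep j, ← Matrix.mul_apply,
      Matrix.adjugate_mul]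
    by_cases hki : k = i
    · subst hki
      simp [Matrix.one_apply]
    · rw [if_neg hki, Matrix.smul_apply, Matrix.one_apply_ne (fun h => hki h.symm),
        smul_zero]
  -- closure of J under the graded contraction
  have hinv : ∀ x ∈ J, CliffordAlgebra.involute x ∈ J := by
    intro x hx
    obtain ⟨x₀, hx₀, x₁, hx₁, he, ho, rfl⟩ := hgraded x hx
    rw [map_add, CliffordAlgebra.involute_eq_of_mem_even he,
      CliffordAlgebra.involute_eq_of_mem_odd ho]
    rw [← sub_eq_add_neg]
    exact J.sub_mem hx₀ hx₁
  have hder_mem : ∀ (v : V), ∀ x ∈ J, cgitDer Q v x ∈ J := by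
    intro v x hx
    rw [cgitDer_apply]
    exact J.sub_mem (J.mul_mem_left _ _ hx) (J.mul_mem_right _ _ (hinv x hx))
  -- action of the contractions on basis elements
  have hder_gen_mem : ∀ (i : ι) (T : Finset ι), i ∈ T → ∃ u : R, (u = 1 ∨ u = -1) ∧
      cgitDer Q (fv i) (cgitGen Q b T) = (u * G.det) • cgitGen Q b (T.erase i) := by
    intro i T hiT
    obtain ⟨u, hu, h⟩ := cgit_der_erase (Q := Q) (b := b) (cgitDer Q (fv i))
      (fun k => if k = i then G.det else 0) (cgitDer_one Q (fv i))
      (fun j x => by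
        simpa only [hpolar_fv] using cgitDer_ι_mul Q (fv i) (b j) x) i
      (fun k hk => by exact if_neg hk)
      (T.sort (· ≤ ·)) (T.sort_nodup _) ((Finset.mem_sort (· ≤ ·)).mpr hiT)
    refine ⟨u, hu, ?_⟩
    beta_reduce at h
    rw [if_pos rfl] at h
    rw [show cgitGen Q b T = cgitProd Q b (T.sort (· ≤ ·)) from rfl, h, cgitSort_erase]
    rfl
  have hder_gen_zero : ∀ (i : ι) (T : Finset ι), i ∉ T →
      cgitDer Q (fv i) (cgitGen Q b T) = 0 := by
    intro i T hiT
    refine cgit_der_zero (Q := Q) (b := b) (cgitDer Q (fv i))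
      (fun k => if k = i then G.det else 0) (cgitDer_one Q (fv i))
      (fun j x => by
        simpa only [hpolar_fv] using cgitDer_ι_mul Q (fv i) (b j) x)
      (T.sort (· ≤ ·)) ?_
    intro k hk
    refine if_neg ?_
    rintro rfl
    exact hiT ((Finset.mem_sort (α := ι) (· ≤ ·)).mp hk)
  have hrepr_gen : ∀ T : Finset ι, eb.repr (cgitGen Q b T) = Finsupp.single T 1 := by
    intro T
    rw [← cgitBasis_apply Q b B hB T, ← heb]
    exact eb.repr_self T
  -- main downward induction on the degree of the support
  have main : ∀ m : ℕ, ∀ x ∈ J, (∀ T : Finset ι, m < T.card → eb.repr x T = 0) →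
      x = 0 := by
    intro m
    induction m with
    | zero =>
      intro x hx hsupp
      have hx2 : x = eb.repr x ∅ • (1 : CliffordAlgebra Q) := by
        conv_lhs => rw [← Module.Basis.sum_repr eb x]
        rw [Finset.sum_eq_single ∅]
        · rw [heb, cgitBasis_apply, cgitGen_empty]
        · intro T _ hT
          rw [hsupp T (Finset.card_pos.mpr (Finset.nonempty_of_ne_empty hT)),
            zero_smul]
        · intro h; exact absurd (Finset.mem_univ ∅) h
      have hxa : x = algebraMap R (CliffordAlgebra Q) (eb.repr x ∅) := by
        rw [Algebra.algebraMap_eq_smul_one]; exact hx2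
      have h0 : eb.repr x ∅ = 0 := hR _ (by rw [← hxa]; exact hx)
      rw [hx2, h0, zero_smul]
    | succ m ih =>
      intro x hx hsupp
      have hxsum : x = ∑ T : Finset ι, eb.repr x T • cgitGen Q b T := by
        conv_lhs => rw [← Module.Basis.sum_repr eb x]
        refine Finset.sum_congr rfl fun T _ => ?_
        rw [heb, cgitBasis_apply]
      have hexp : ∀ (i : ι) (T' : Finset ι),
          eb.repr (cgitDer Q (fv i) x) T' =
            ∑ T : Finset ι, eb.repr x T *
              eb.repr (cgitDer Q (fv i) (cgitGen Q b T)) T' := by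
        intro i T'
        conv_lhs => rw [hxsum]
        rw [map_sum, map_sum, Finset.sum_apply']
        refine Finset.sum_congr rfl fun T _ => ?_
        rw [map_smul, map_smul, Finsupp.smul_apply, smul_eq_mul]
      have hy : ∀ i : ι, cgitDer Q (fv i) x = 0 := by
        intro i
        refine ih _ (hder_mem _ x hx) ?_
        intro T' hT'
        rw [hexp i T']
        refine Finset.sum_eq_zero fun T _ => ?_
        by_cases hcT : m + 1 < T.card
        · rw [hsupp T hcT, zero_mul]
        · by_cases hiT : i ∈ T
          · obtain ⟨u, hu, hdeq⟩ := hder_gen_mem i T hiT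
            rw [hdeq, map_smul, Finsupp.smul_apply, hrepr_gen,
              Finsupp.single_apply, if_neg, smul_zero, mul_zero]
            intro he
            have hce := Finset.card_erase_of_mem hiT
            rw [he] at hce
            omega
          · rw [hder_gen_zero i T hiT, map_zero, Finsupp.zero_apply, mul_zero]
      have hcoeff : ∀ S : Finset ι, S.card = m + 1 → eb.repr x S = 0 := by
        intro S hSc
        obtain ⟨i, hiS⟩ := Finset.card_pos.mp (by omega : 0 < S.card)
        have h0 : eb.repr (cgitDer Q (fv i) x) (S.erase i) = 0 := by
          rw [hy i, map_zero, Finsupp.zero_apply]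
        rw [hexp i (S.erase i), Finset.sum_eq_single S] at h0
        · obtain ⟨u, hu, hdeq⟩ := hder_gen_mem i S hiS
          rw [hdeq, map_smul, Finsupp.smul_apply, hrepr_gen,
            Finsupp.single_apply, if_pos rfl, smul_eq_mul, mul_one] at h0
          have hmul : eb.repr x S * G.det = 0 := by
            rcases hu with rfl | rfl
            · rwa [one_mul] at h0
            · rw [neg_one_mul, mul_neg, neg_eq_zero] at h0; exact h0
          exact (mem_nonZeroDivisors_iff.mp hnd).2 _ hmul
        · intro T _ hTS
          by_cases hiT : i ∈ T
          · obtain ⟨u', hu', hdeq'⟩ := hder_gen_mem i T hiT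
            rw [hdeq', map_smul, Finsupp.smul_apply, hrepr_gen,
              Finsupp.single_apply, if_neg, smul_zero, mul_zero]
            intro he
            apply hTS
            rw [← Finset.insert_erase hiT, ← Finset.insert_erase hiS, he]
          · rw [hder_gen_zero i T hiT, map_zero, Finsupp.zero_apply, mul_zero]
        · intro h; exact absurd (Finset.mem_univ S) h
      refine ih x hx ?_
      intro T hTcard
      rcases Nat.lt_or_ge (m + 1) T.card with h | h
      · exact hsupp T h
      · exact hcoeff T (le_antisymm h hTcard)
  intro x hx
  refine main (Fintype.card ι) x hx fun T hT => absurd (Finset.card_le_univ T) ?_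
  exact not_le.mpr hT
end

section
/- For the Suslin matrix construction: S_n(v,w)·conj(S_n(v,w)) = conj(S_n(v,w))·S_n(v,w) = (v·wᵀ)·I_{2^n} for all vectors v, w ∈ R^{n+1}. -/
/-- The pair (S_n(v,w), conj(S_n(v,w))) of Suslin matrices of size 2^n built from
vectors v, w ∈ R^{n+1}, defined recursively: S₀(v,w) = (a₀), conj S₀ = (b₀), and
S_n(v,w) = [[a₀I, S_{n−1}(v₁,w₁)],[−conj S_{n−1}(v₁,w₁), b₀I]],
conj S_n(v,w) = [[b₀I, −S_{n−1}(v₁,w₁)],[conj S_{n−1}(v₁,w₁), a₀I]]. -/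
def suslinPair (R : Type*) [CommRing R] :
    (n : ℕ) → (Fin (n + 1) → R) → (Fin (n + 1) → R) →
      Matrix (Fin (2 ^ n)) (Fin (2 ^ n)) R × Matrix (Fin (2 ^ n)) (Fin (2 ^ n)) R
  | 0, v, w => (v 0 • (1 : Matrix (Fin 1) (Fin 1) R),
                w 0 • (1 : Matrix (Fin 1) (Fin 1) R))
  | n + 1, v, w =>
      let p := suslinPair R n (fun i => v i.succ) (fun i => w i.succ)
      let e : Fin (2 ^ n) ⊕ Fin (2 ^ n) ≃ Fin (2 ^ (n + 1)) :=
        finSumFinEquiv.trans (finCongr (by rw [pow_succ, mul_two]))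
      ((Matrix.reindex e e) (Matrix.fromBlocks (v 0 • 1) p.1 (-p.2) (w 0 • 1)),
       (Matrix.reindex e e) (Matrix.fromBlocks (w 0 • 1) (-p.1) p.2 (v 0 • 1)))

/-- S_n(v,w)·conj(S_n(v,w)) = conj(S_n(v,w))·S_n(v,w)
= (v·wᵀ)·I_{2^n} for all v, w ∈ R^{n+1}. -/
theorem suslin_mul_conj {R : Type*} [CommRing R] (n : ℕ)
    (v w : Fin (n + 1) → R) :
    (suslinPair R n v w).1 * (suslinPair R n v w).2 =
        (∑ i, v i * w i) • (1 : Matrix (Fin (2 ^ n)) (Fin (2 ^ n)) R) ∧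
    (suslinPair R n v w).2 * (suslinPair R n v w).1 =
        (∑ i, v i * w i) • (1 : Matrix (Fin (2 ^ n)) (Fin (2 ^ n)) R) := by
  induction n with
  | zero =>
      constructor <;>
      · simp [suslinPair, smul_smul, mul_comm]
  | succ n ih =>
      obtain ⟨ih1, ih2⟩ := ih (fun i => v i.succ) (fun i => w i.succ)
      set S := (suslinPair R n (fun i => v i.succ) (fun i => w i.succ)).1 with hS
      set T := (suslinPair R n (fun i => v i.succ) (fun i => w i.succ)).2 with hT
      set s : R := ∑ i : Fin (n + 1), v i.succ * w i.succ with hs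
      have hsum : (∑ i, v i * w i) = v 0 * w 0 + s := by
        rw [Fin.sum_univ_succ, hs]
      have h1 : (v 0 • (1 : Matrix (Fin (2^n)) (Fin (2^n)) R)) * (w 0 • 1) + S * T
          = (v 0 * w 0 + s) • 1 := by
        simp [Matrix.smul_mul, Matrix.mul_smul, ih1, ih2, smul_smul, add_smul,
          mul_comm, add_comm, smul_neg]
      have h2 : (v 0 • (1 : Matrix (Fin (2^n)) (Fin (2^n)) R)) * (-S) + S * (v 0 • 1)
          = 0 := by
        simp [Matrix.smul_mul, Matrix.mul_smul, smul_smul, smul_neg]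
      have h3 : (-T) * (w 0 • 1) + (w 0 • (1 : Matrix (Fin (2^n)) (Fin (2^n)) R)) * T
          = 0 := by
        simp [Matrix.smul_mul, Matrix.mul_smul, smul_smul, smul_neg]
      have h4 : (-T) * (-S) + (w 0 • (1 : Matrix (Fin (2^n)) (Fin (2^n)) R)) * (v 0 • 1)
          = (v 0 * w 0 + s) • 1 := by
        simp [Matrix.smul_mul, Matrix.mul_smul, ih1, ih2, smul_smul, add_smul,
          mul_comm, add_comm, smul_neg]
      have h1' : (w 0 • (1 : Matrix (Fin (2^n)) (Fin (2^n)) R)) * (v 0 • 1) + (-S) * (-T)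
          = (v 0 * w 0 + s) • 1 := by
        simp [Matrix.smul_mul, Matrix.mul_smul, ih1, ih2, smul_smul, add_smul,
          mul_comm, add_comm, smul_neg]
      have h2' : (w 0 • (1 : Matrix (Fin (2^n)) (Fin (2^n)) R)) * S + (-S) * (w 0 • 1)
          = 0 := by
        simp [Matrix.smul_mul, Matrix.mul_smul, smul_smul, smul_neg]
      have h3' : T * (v 0 • 1) + (v 0 • (1 : Matrix (Fin (2^n)) (Fin (2^n)) R)) * (-T)
          = 0 := by
        simp [Matrix.smul_mul, Matrix.mul_smul, smul_smul, smul_neg]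
      have h4' : T * S + (v 0 • (1 : Matrix (Fin (2^n)) (Fin (2^n)) R)) * (w 0 • 1)
          = (v 0 * w 0 + s) • 1 := by
        simp [Matrix.smul_mul, Matrix.mul_smul, ih1, ih2, smul_smul, add_smul,
          mul_comm, add_comm, smul_neg]
      have hone : ∀ (c : R), c • (1 : Matrix (Fin (2^n) ⊕ Fin (2^n)) (Fin (2^n) ⊕ Fin (2^n)) R)
          = Matrix.fromBlocks (c • 1) 0 0 (c • 1) := by
        intro c
        rw [← Matrix.fromBlocks_one, Matrix.fromBlocks_smul, smul_zero]
      simp only [suslinPair]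
      constructor
      · simp only [Matrix.reindex_apply]
        rw [Matrix.submatrix_mul_equiv, Matrix.fromBlocks_multiply,
          h1, h2, h3, h4, ← hone, hsum]
        rw [Matrix.submatrix_smul, Pi.smul_apply, Pi.smul_apply, Matrix.submatrix_one_equiv]
      · simp only [Matrix.reindex_apply]
        rw [Matrix.submatrix_mul_equiv, Matrix.fromBlocks_multiply,
          h1', h2', h3', h4', ← hone, hsum]
        rw [Matrix.submatrix_smul, Pi.smul_apply, Pi.smul_apply, Matrix.submatrix_one_equiv]
end

section
/- The map φ : H(R^n) → M_{2^n}(R) sending (v,w) to [[0, S_{n−1}(v,w)],[conj(S_{n−1}(v,w)), 0]] satisfies φ(v,w)² = (v·wᵀ)·I_{2^n}, hence induces an R-algebra homomorphism from the Clifford algebra Cl(H(R^n)) to M_{2^n}(R). -/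
/-- The hyperbolic quadratic form on H(R^n) = R^n ⊕ R^n, q(v,w) = v·wᵀ. -/
def hypForm (R : Type*) [CommRing R] (n : ℕ) :
    QuadraticForm R ((Fin n → R) × (Fin n → R)) :=
  LinearMap.BilinMap.toQuadraticMap <|
    LinearMap.mk₂ R (fun x y => ∑ i, x.1 i * y.2 i)
      (fun x x' y => by simp [add_mul, Finset.sum_add_distrib])
      (fun r x y => by simp [Finset.mul_sum, mul_assoc])
      (fun x y y' => by simp [mul_add, Finset.sum_add_distrib])
      (fun r x y => by simp [Finset.mul_sum, mul_left_comm])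

/-- The Suslin embedding φ : H(R^{m+1}) → M_{2^{m+1}}(R),
φ(v,w) = [[0, S_m(v,w)],[conj S_m(v,w), 0]]. -/
def suslinPhi (R : Type*) [CommRing R] (m : ℕ)
    (p : (Fin (m + 1) → R) × (Fin (m + 1) → R)) :
    Matrix (Fin (2 ^ (m + 1))) (Fin (2 ^ (m + 1))) R :=
  let e : Fin (2 ^ m) ⊕ Fin (2 ^ m) ≃ Fin (2 ^ (m + 1)) :=
    finSumFinEquiv.trans (finCongr (by rw [pow_succ, mul_two]))
  (Matrix.reindex e e)
    (Matrix.fromBlocks 0 (suslinPair R m p.1 p.2).1 (suslinPair R m p.1 p.2).2 0)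


section Aux
variable {R : Type*} [CommRing R]

private lemma reindex_mul {k l : Type*} [Fintype k] [Fintype l] [DecidableEq k] [DecidableEq l]
    (e : k ≃ l) (A B : Matrix k k R) :
    (Matrix.reindex e e) A * (Matrix.reindex e e) B = (Matrix.reindex e e) (A * B) := by
  simp [Matrix.reindex_apply, Matrix.submatrix_mul_equiv]

private lemma reindex_smul_one {k l : Type*} [Fintype k] [Fintype l] [DecidableEq k]
    [DecidableEq l] (e : k ≃ l) (c : R) :
    (Matrix.reindex e e) (c • (1 : Matrix k k R)) = c • 1 := by
  simp [Matrix.reindex_apply, Matrix.submatrix_smul, Matrix.submatrix_one_equiv e.symm]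

private lemma reindex_of_eq {k l : Type*} [Fintype k] [Fintype l] [DecidableEq k]
    [DecidableEq l] (e : k ≃ l) {A : Matrix k k R} {c : R} (h : A = c • 1) :
    (Matrix.reindex e e) A = c • 1 := by
  rw [h, reindex_smul_one]

private lemma reindex_add {k l : Type*} (e : k ≃ l) (A B : Matrix k k R) :
    (Matrix.reindex e e) (A + B) = (Matrix.reindex e e) A + (Matrix.reindex e e) B := rfl

private lemma reindex_smul {k l : Type*} (e : k ≃ l) (c : R) (A : Matrix k k R) :
    (Matrix.reindex e e) (c • A) = c • (Matrix.reindex e e) A := rfl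

private lemma fromBlocks_smul_one {k l : Type*} [DecidableEq k] [DecidableEq l] (c : R)
    {A : Matrix k k R} {B : Matrix k l R} {C : Matrix l k R} {D : Matrix l l R}
    (hA : A = c • 1) (hB : B = 0) (hC : C = 0) (hD : D = c • 1) :
    Matrix.fromBlocks A B C D = c • (1 : Matrix (k ⊕ l) (k ⊕ l) R) := by
  subst hA hB hC hD
  rw [← Matrix.fromBlocks_one, Matrix.fromBlocks_smul]
  simp

private lemma suslinPair_mul (n : ℕ) (v w : Fin (n + 1) → R) :
    (suslinPair R n v w).1 * (suslinPair R n v w).2 = (∑ i, v i * w i) • 1 ∧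
    (suslinPair R n v w).2 * (suslinPair R n v w).1 = (∑ i, v i * w i) • 1 := by
  induction n with
  | zero => constructor <;> simp [suslinPair, smul_smul, mul_comm]
  | succ n ih =>
    obtain ⟨h1, h2⟩ := ih (fun i => v i.succ) (fun i => w i.succ)
    have hsum : (∑ i, v i * w i) =
        v 0 * w 0 + ∑ i : Fin (n + 1), v i.succ * w i.succ := by
      rw [Fin.sum_univ_succ]
    constructor <;>
    · simp only [suslinPair]
      rw [reindex_mul, Matrix.fromBlocks_multiply, hsum]
      apply reindex_of_eq
      refine fromBlocks_smul_one _ ?_ ?_ ?_ ?_ <;>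
      · simp only [Matrix.neg_mul, Matrix.mul_neg, smul_mul_assoc, mul_smul_comm, one_mul,
          mul_one, smul_smul, h1, h2, neg_neg]
        module

private lemma suslinPair_add (n : ℕ) (v w v' w' : Fin (n + 1) → R) :
    suslinPair R n (v + v') (w + w') = suslinPair R n v w + suslinPair R n v' w' := by
  induction n with
  | zero => simp [suslinPair, Prod.ext_iff, add_smul]
  | succ n ih =>
    have h := ih (fun i => v i.succ) (fun i => w i.succ)
      (fun i => v' i.succ) (fun i => w' i.succ)
    simp only [Prod.ext_iff, Prod.fst_add, Prod.snd_add] at h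
    simp only [suslinPair, Pi.add_apply, Prod.ext_iff, Prod.fst_add, Prod.snd_add]
    rw [show (fun i : Fin (n + 1) => v i.succ + v' i.succ)
          = ((fun i => v i.succ) + fun i => v' i.succ) from rfl,
        show (fun i : Fin (n + 1) => w i.succ + w' i.succ)
          = ((fun i => w i.succ) + fun i => w' i.succ) from rfl, h.1, h.2]
    constructor <;>
    · rw [← reindex_add]
      congr 1
      simp [Matrix.fromBlocks_add, add_smul, neg_add, add_comm]

private lemma suslinPair_smul (n : ℕ) (c : R) (v w : Fin (n + 1) → R) :
    suslinPair R n (c • v) (c • w) = c • suslinPair R n v w := by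
  induction n with
  | zero => simp [suslinPair, Prod.ext_iff, smul_smul]
  | succ n ih =>
    have h := ih (fun i => v i.succ) (fun i => w i.succ)
    simp only [Prod.ext_iff, Prod.smul_fst, Prod.smul_snd] at h
    simp only [suslinPair, Pi.smul_apply, Prod.ext_iff, Prod.smul_fst, Prod.smul_snd,
      smul_eq_mul]
    rw [show (fun i : Fin (n + 1) => c * v i.succ)
          = (c • fun i => v i.succ) from rfl,
        show (fun i : Fin (n + 1) => c * w i.succ)
          = (c • fun i => w i.succ) from rfl, h.1, h.2]
    constructor <;>
    · rw [← reindex_smul]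
      congr 1
      simp [Matrix.fromBlocks_smul, smul_smul, smul_neg]

private lemma suslinPhi_sq (m : ℕ) (p : (Fin (m + 1) → R) × (Fin (m + 1) → R)) :
    suslinPhi R m p * suslinPhi R m p =
      (∑ i, p.1 i * p.2 i) • (1 : Matrix (Fin (2 ^ (m + 1))) (Fin (2 ^ (m + 1))) R) := by
  obtain ⟨h1, h2⟩ := suslinPair_mul m p.1 p.2
  simp only [suslinPhi]
  rw [reindex_mul, Matrix.fromBlocks_multiply]
  apply reindex_of_eq
  refine fromBlocks_smul_one _ ?_ ?_ ?_ ?_ <;>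
    simp [h1, h2]

private lemma suslinPhi_add (m : ℕ) (p q : (Fin (m + 1) → R) × (Fin (m + 1) → R)) :
    suslinPhi R m (p + q) = suslinPhi R m p + suslinPhi R m q := by
  have h := suslinPair_add m p.1 p.2 q.1 q.2
  simp only [Prod.ext_iff, Prod.fst_add, Prod.snd_add] at h
  simp only [suslinPhi, Prod.fst_add, Prod.snd_add, h.1, h.2, ← reindex_add]
  congr 1
  simp [Matrix.fromBlocks_add]

private lemma suslinPhi_smul (m : ℕ) (c : R) (p : (Fin (m + 1) → R) × (Fin (m + 1) → R)) :
    suslinPhi R m (c • p) = c • suslinPhi R m p := by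
  have h := suslinPair_smul m c p.1 p.2
  simp only [Prod.ext_iff, Prod.smul_fst, Prod.smul_snd] at h
  simp only [suslinPhi, Prod.smul_fst, Prod.smul_snd, h.1, h.2, ← reindex_smul]
  congr 1
  simp [Matrix.fromBlocks_smul]

end Aux

/-- φ(v,w)² = (v·wᵀ)·I, hence φ induces an R-algebra homomorphism
Cl(H(R^n)) → M_{2^n}(R) (here n = m+1 ≥ 1). -/
theorem suslin_clifford_hom {R : Type*} [CommRing R] (m : ℕ) :
    (∀ p : (Fin (m + 1) → R) × (Fin (m + 1) → R),
      suslinPhi R m p * suslinPhi R m p =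
        (∑ i, p.1 i * p.2 i) •
          (1 : Matrix (Fin (2 ^ (m + 1))) (Fin (2 ^ (m + 1))) R)) ∧
    ∃ g : CliffordAlgebra (hypForm R (m + 1)) →ₐ[R]
        Matrix (Fin (2 ^ (m + 1))) (Fin (2 ^ (m + 1))) R,
      ∀ p, g (CliffordAlgebra.ι (hypForm R (m + 1)) p) = suslinPhi R m p := by

  refine ⟨suslinPhi_sq m, ?_⟩
  have hq : ∀ p : (Fin (m + 1) → R) × (Fin (m + 1) → R),
      hypForm R (m + 1) p = ∑ i, p.1 i * p.2 i := by
    intro p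
    simp [hypForm, LinearMap.BilinMap.toQuadraticMap_apply]
  let f : ((Fin (m + 1) → R) × (Fin (m + 1) → R)) →ₗ[R]
      Matrix (Fin (2 ^ (m + 1))) (Fin (2 ^ (m + 1))) R :=
    { toFun := suslinPhi R m
      map_add' := suslinPhi_add m
      map_smul' := suslinPhi_smul m }
  have cond : ∀ p, f p * f p = algebraMap R _ (hypForm R (m + 1) p) := by
    intro p
    rw [hq, Algebra.algebraMap_eq_smul_one]
    exact suslinPhi_sq m p
  exact ⟨CliffordAlgebra.lift _ ⟨f, cond⟩, fun p => CliffordAlgebra.lift_ι_apply _ _ p⟩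
end
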